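/- Let F be a partial E-field whose underlying field contains a primitive m-th root of unity for every m ≥ 1 (for instance, an algebraically closed field of characteristic zero). Then F has full kernel if and only if for every m ≥ 1 the quotient group ker(F)/m·ker(F) is cyclic of order m. -/

import Mathlib

noncomputable section
open scoped Pointwise
open Cardinal

namespace Paper

variable (F : Type*) [Field F] [CharZero F]

/-- `td F X Y` : the transcendence degree of the field `ℚ(X ∪ Y)` over `ℚ(X)`,
computed as the supremum of cardinalities of subsets of `Y` which are algebraically
independent over the subfield generated by `X`. -/
def td (X Y : Set F) : Cardinal :=
  ⨆ p : {s : Set F // s ⊆ Y ∧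
      AlgebraicIndependent (IntermediateField.adjoin ℚ X) (fun y : s => (y : F))},
    Cardinal.mk p.1

/-- Natural-number valued relative transcendence degree. -/
def tdN (X Y : Set F) : ℕ := (td F X Y).toNat

/-- `ldim F X Y` : the dimension of the quotient of the `ℚ`-span of `X ∪ Y`
by the `ℚ`-span of `X`, i.e. `ldim_ℚ(Y/X)`. -/
def ldim (X Y : Set F) : Cardinal :=
  Module.rank ℚ (Submodule.span ℚ ((Submodule.span ℚ X).mkQ '' Y))

/-- Natural-number valued relative linear dimension. -/
def ldimN (X Y : Set F) : ℕ := (ldim F X Y).toNat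

/-- The Schanuel property for a total exponential map:
`td(x̄ ∪ exp(x̄)/∅) ≥ ldim_ℚ(x̄/∅)` for every finite tuple `x̄`. -/
def Schanuel (exp : F → F) : Prop :=
  ∀ s : Finset F, ldim F ∅ ↑s ≤ td F ∅ (↑s ∪ exp '' ↑s)

/-- A partial E-field structure on a field `F` of characteristic zero: a `ℚ`-subspace
`D`, and an exponential map which is a homomorphism from `D` to `Fˣ`. -/
structure PEField (F : Type*) [Field F] [CharZero F] where
  D : Submodule ℚ F
  exp : F → F
  exp_ne_zero : ∀ a ∈ D, exp a ≠ 0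
  exp_add : ∀ a ∈ D, ∀ b ∈ D, exp (a + b) = exp a * exp b

namespace PEField

variable {F} (E : PEField F)

/-- The kernel of the exponential map, as a set. -/
def kerSet : Set F := {a | a ∈ E.D ∧ E.exp a = 1}

lemma exp_zero : E.exp 0 = 1 := by
  have h0 : (0 : F) ∈ E.D := E.D.zero_mem
  have h := E.exp_add 0 h0 0 h0
  rw [add_zero] at h
  have hne := E.exp_ne_zero 0 h0
  have h' : E.exp 0 * 1 = E.exp 0 * E.exp 0 := by rw [mul_one]; exact h
  exact (mul_left_cancel₀ hne h').symm

/-- The kernel of the exponential map, as an additive subgroup of `F`. -/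
def ker : AddSubgroup F where
  carrier := {a | a ∈ E.D ∧ E.exp a = 1}
  zero_mem' := ⟨E.D.zero_mem, E.exp_zero⟩
  add_mem' := by
    rintro a b ⟨haD, ha⟩ ⟨hbD, hb⟩
    exact ⟨E.D.add_mem haD hbD, by rw [E.exp_add a haD b hbD, ha, hb, mul_one]⟩
  neg_mem' := by
    rintro a ⟨haD, ha⟩
    refine ⟨E.D.neg_mem haD, ?_⟩
    have h := E.exp_add a haD (-a) (E.D.neg_mem haD)
    rw [add_neg_cancel, E.exp_zero, ha, one_mul] at h
    exact h.symm

/-- The image `I(F)` of the exponential map. -/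
def img : Set F := E.exp '' (E.D : Set F)

/-- `F` has full kernel iff every root of unity lies in the image of `exp`. -/
def FullKernel : Prop :=
  ∀ x : F, (∃ m : ℕ, 0 < m ∧ x ^ m = 1) → x ∈ E.exp '' (E.D : Set F)

/-- `F` has very full kernel iff every coherent system of roots of unity is of the
form `(exp (a/m))_{m ≥ 1}` for some `a ∈ D(F)`. -/
def VeryFullKernel : Prop :=
  ∀ c : ℕ → F, c 1 = 1 → (∀ r m : ℕ, 0 < r → 0 < m → c (r * m) ^ r = c m) →
    ∃ a ∈ E.D, ∀ m : ℕ, 0 < m → E.exp (a / (m : F)) = c m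

end PEField

/-- A partial E-subfield of a partial E-field: a subfield together with a `ℚ`-subspace
of `D(F)` contained in it, closed under the exponential map. -/
structure ESub {F : Type*} [Field F] [CharZero F] (E : PEField F) where
  carrier : Subfield F
  dom : Submodule ℚ F
  dom_le : dom ≤ E.D
  dom_sub : (dom : Set F) ⊆ (carrier : Set F)
  exp_mem : ∀ a ∈ dom, E.exp a ∈ carrier

namespace ESub

variable {F : Type*} [Field F] [CharZero F] {E : PEField F}

/-- The kernel of a partial E-subfield. -/
def kerSet (A : ESub E) : Set F := {a | a ∈ A.dom ∧ E.exp a = 1}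

/-- Inclusion (extension) of partial E-subfields. -/
def le (A B : ESub E) : Prop := A.carrier ≤ B.carrier ∧ A.dom ≤ B.dom

end ESub

/-- The whole of a partial E-field, viewed as a partial E-subfield of itself. -/
def PEField.top {F : Type*} [Field F] [CharZero F] (E : PEField F) : ESub E where
  carrier := ⊤
  dom := E.D
  dom_le := le_rfl
  dom_sub := fun x _ => Subfield.mem_top x
  exp_mem := fun a _ => Subfield.mem_top _

variable {F}

/-- The relative predimension function `Δ_B(x̄/A)` for an extension `A ⊆ B` of
partial E-(sub)fields:
`td(x̄ ∪ exp(x̄ ∩ D(B)) / A ∪ ker(B)) − ldim_ℚ(x̄ ∩ D(B) / D(A) ∪ ker(B))`. -/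
def Delta (E : PEField F) (A B : ESub E) (s : Finset F) : ℤ :=
  (tdN F ((A.carrier : Set F) ∪ B.kerSet) (↑s ∪ E.exp '' (↑s ∩ (B.dom : Set F))) : ℤ) -
    (ldimN F ((A.dom : Set F) ∪ B.kerSet) (↑s ∩ (B.dom : Set F)) : ℤ)

/-- The extension `A ⊆ B` of partial E-(sub)fields is semi-strong: `Δ_B(x̄/A) ≥ 0`
for all tuples `x̄` from `B`, and `A` is algebraically free from `ker(B)` over `ker(A)`. -/
def SemiStrong (E : PEField F) (A B : ESub E) : Prop :=
  (∀ s : Finset F, ↑s ⊆ (B.carrier : Set F) → 0 ≤ Delta E A B s) ∧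
  (∀ t : Finset F, ↑t ⊆ (A.carrier : Set F) →
    tdN F (A.kerSet ∪ B.kerSet) ↑t = tdN F A.kerSet ↑t)

/-- The predimension `δ(ā/X)` of a finite tuple over a subset `X` of a partial E-field:
`td(ā ∪ exp(ā ∩ D) / X ∪ exp(X ∩ D)) − ldim_ℚ(ā/X)`. -/
def deltaSet (E : PEField F) (X : Set F) (s : Finset F) : ℤ :=
  (tdN F (X ∪ E.exp '' (X ∩ (E.D : Set F))) (↑s ∪ E.exp '' (↑s ∩ (E.D : Set F))) : ℤ) -
    (ldimN F X ↑s : ℤ)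

lemma span_le_subfield {K : Subfield F} {S : Set F} (h : S ⊆ (K : Set F)) :
    ((Submodule.span ℚ S : Submodule ℚ F) : Set F) ⊆ (K : Set F) := by
  intro x hx
  induction hx using Submodule.span_induction with
  | mem x hx => exact h hx
  | zero => exact zero_mem K
  | add x y _ _ hx hy => exact add_mem hx hy
  | smul q x _ hx => rw [Rat.smul_def]; exact mul_mem (SubfieldClass.ratCast_mem K q) hx

/-- The partial E-subfield `⟨X⟩_F` generated by a subset `X`: its domain is
`span_ℚ(X ∩ D(F))` and its field is generated by `X ∪ exp(span_ℚ(X ∩ D(F)))`. -/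
def genSub (E : PEField F) (X : Set F) : ESub E where
  carrier := Subfield.closure
    (X ∪ E.exp '' ((Submodule.span ℚ (X ∩ (E.D : Set F)) : Submodule ℚ F) : Set F))
  dom := Submodule.span ℚ (X ∩ (E.D : Set F))
  dom_le := Submodule.span_le.mpr Set.inter_subset_right
  dom_sub := by
    refine span_le_subfield ?_
    intro x hx
    exact Subfield.subset_closure (Set.mem_union_left _ hx.1)
  exp_mem := fun a ha => Subfield.subset_closure (Set.mem_union_right _ ⟨a, ha, rfl⟩)

/-- `Δ_F(x̄/B)` for an arbitrary subset `B` : the predimension of `x̄` over the partial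
E-subfield `⟨ker(F) ∪ B⟩_F`. -/
def DeltaOver (E : PEField F) (B : Set F) (s : Finset F) : ℤ :=
  Delta E (genSub E (E.kerSet ∪ B)) E.top s

/-- The natural map `Fˣ → ℚ ⊗[ℤ] Additive Fˣ`. -/
def toQV : Fˣ → TensorProduct ℤ ℚ (Additive Fˣ) :=
  fun u => TensorProduct.tmul ℤ (1 : ℚ) (Additive.ofMul u)

/-- The multiplicative rank `mrk(B/H)` : the dimension of the `ℚ`-span of the image of
`B` in `ℚ ⊗_ℤ Fˣ`, modulo the `ℚ`-span of the image of `H`. -/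
def mrk (H B : Set Fˣ) : ℕ :=
  (Module.rank ℚ (Submodule.span ℚ
    ((Submodule.span ℚ (toQV '' H)).mkQ '' (toQV '' B)))).toNat

/-- The set of units lying in a given subset of `F`. -/
def unitsOf (S : Set F) : Set Fˣ := {u : Fˣ | (u : F) ∈ S}

/-- The partial E-subfield with underlying set `X` and domain `DX` is semi-strong in
the partial E-field `E`. -/
def SemiStrongSet (E : PEField F) (X DX : Set F) : Prop :=
  (∀ s : Finset F,
    0 ≤ (tdN F (X ∪ E.kerSet) (↑s ∪ E.exp '' (↑s ∩ (E.D : Set F))) : ℤ) -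
        (ldimN F (DX ∪ E.kerSet) (↑s ∩ (E.D : Set F)) : ℤ)) ∧
  (∀ t : Finset F, ↑t ⊆ X →
    tdN F ({a ∈ DX | E.exp a = 1} ∪ E.kerSet) ↑t = tdN F {a ∈ DX | E.exp a = 1} ↑t)

/-- An ELA-field: an algebraically closed field of characteristic zero together with a
total exponential map which is surjective onto the multiplicative group. -/
structure ELAField (K : Type*) [Field K] [CharZero K] where
  exp : K → K
  exp_ne_zero : ∀ x, exp x ≠ 0
  exp_add : ∀ x y, exp (x + y) = exp x * exp y
  alg_closed : IsAlgClosed K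
  exp_surj : ∀ y : K, y ≠ 0 → ∃ x, exp x = y

/-- An ELA-field regarded as a (total) partial E-field. -/
def ELAField.toPE {K : Type*} [Field K] [CharZero K] (L : ELAField K) : PEField K :=
  ⟨⊤, L.exp, fun a _ => L.exp_ne_zero a, fun a _ b _ => L.exp_add a b⟩

/-- `S` is an ELA-closed subfield of the ELA-field `K`: it is (the underlying set of) a
subfield, closed under `exp`, contains an `exp`-preimage of each of its nonzero elements,
and is relatively algebraically closed in `K`. -/
def IsELASub {K : Type*} [Field K] [CharZero K] (L : ELAField K) (S : Set K) : Prop :=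
  (∃ Sf : Subfield K, (Sf : Set K) = S) ∧
  (∀ x ∈ S, L.exp x ∈ S) ∧
  (∀ y ∈ S, y ≠ 0 → ∃ x ∈ S, L.exp x = y) ∧
  (∀ x : K, ∀ p : Polynomial K, p ≠ 0 → (∀ i, p.coeff i ∈ S) →
    Polynomial.eval x p = 0 → x ∈ S)

/-- `S = ⟨A⟩^{ELA}_K` : `S` is the smallest ELA-closed subfield of `K` containing `A`. -/
def IsELAGen {K : Type*} [Field K] [CharZero K] (L : ELAField K) (A S : Set K) : Prop :=
  IsELASub L S ∧ A ⊆ S ∧ ∀ T : Set K, IsELASub L T → A ⊆ T → S ⊆ T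


section Statement3Aux

variable {F : Type*} [Field F] [CharZero F] (E : PEField F)

lemma PEField.mem_ker_iff {a : F} : a ∈ E.ker ↔ a ∈ E.D ∧ E.exp a = 1 := Iff.rfl

lemma PEField.div_nat_mem_D {a : F} (ha : a ∈ E.D) (m : ℕ) : a / (m : F) ∈ E.D := by
  have h := E.D.smul_mem ((m : ℚ)⁻¹) ha
  rwa [Rat.smul_def, show (((m : ℚ)⁻¹ : ℚ) : F) = ((m : F))⁻¹ by push_cast; ring,
    ← div_eq_inv_mul] at h

lemma PEField.exp_nsmul (n : ℕ) {b : F} (hb : b ∈ E.D) :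
    E.exp (n • b) = E.exp b ^ n := by
  induction n with
  | zero => simpa using E.exp_zero
  | succ n ih =>
      rw [succ_nsmul, E.exp_add _ (nsmul_mem hb n) b hb, ih, pow_succ]

/-- The unit `exp(a/m)` for `a` in the kernel. -/
def PEField.expUnit (m : ℕ) (a : ↥E.ker) : Fˣ :=
  Units.mk0 (E.exp ((a : F) / (m : F)))
    (E.exp_ne_zero _ (E.div_nat_mem_D ((E.mem_ker_iff.mp a.2).1) m))

lemma PEField.expUnit_val (m : ℕ) (a : ↥E.ker) :
    (E.expUnit m a : F) = E.exp ((a : F) / (m : F)) := rfl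

lemma nsmul_div_nat (m : ℕ) [NeZero m] (a : F) : m • (a / (m : F)) = a := by
  have hm : (m : F) ≠ 0 := Nat.cast_ne_zero.mpr (NeZero.ne m)
  rw [nsmul_eq_mul]
  field_simp

lemma PEField.expUnit_pow (m : ℕ) [NeZero m] (a : ↥E.ker) :
    E.expUnit m a ^ m = 1 := by
  ext
  rw [Units.val_pow_eq_pow_val, expUnit_val, Units.val_one,
    ← E.exp_nsmul m (E.div_nat_mem_D ((E.mem_ker_iff.mp a.2).1) m), nsmul_div_nat m]
  exact (E.mem_ker_iff.mp a.2).2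

/-- The homomorphism `ker(F) →+ μ_m`, `a ↦ exp(a/m)`. -/
def PEField.psi (m : ℕ) [NeZero m] : ↥E.ker →+ Additive ↥(rootsOfUnity m F) where
  toFun a := Additive.ofMul
    (⟨E.expUnit m a, (mem_rootsOfUnity m _).mpr (E.expUnit_pow m a)⟩ : rootsOfUnity m F)
  map_zero' := by
    rw [show (0 : Additive ↥(rootsOfUnity m F)) = Additive.ofMul 1 from rfl]
    exact congrArg Additive.ofMul (by ext; simp [expUnit_val, E.exp_zero])
  map_add' a b := by
    rw [← ofMul_mul]
    refine congrArg Additive.ofMul ?_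
    ext
    have h1 := (E.mem_ker_iff.mp a.2).1
    have h2 := (E.mem_ker_iff.mp b.2).1
    simp only [Subgroup.coe_mul, Units.val_mul, expUnit_val, AddSubgroup.coe_add,
      MulMemClass.mk_mul_mk]
    rw [add_div, E.exp_add _ (E.div_nat_mem_D h1 m) _ (E.div_nat_mem_D h2 m)]

lemma PEField.psi_apply_eq_iff (m : ℕ) [NeZero m] (a : ↥E.ker) (u : Fˣ)
    (hu : u ∈ rootsOfUnity m F) :
    E.psi m a = Additive.ofMul (⟨u, hu⟩ : rootsOfUnity m F) ↔
      E.exp ((a : F) / (m : F)) = (u : F) := by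
  constructor
  · intro h
    have := congrArg (fun x : Additive ↥(rootsOfUnity m F) => (((Additive.toMul x : ↥(rootsOfUnity m F)) : Fˣ) : F)) h
    simpa [psi, expUnit_val] using this
  · intro h
    simp only [psi, AddMonoidHom.coe_mk, ZeroHom.coe_mk]
    exact congrArg Additive.ofMul (by ext; simpa [expUnit_val] using h)

lemma PEField.ker_psi (m : ℕ) [NeZero m] :
    (E.psi m).ker = m • (⊤ : AddSubgroup ↥E.ker) := by
  ext a
  rw [AddMonoidHom.mem_ker, AddSubgroup.mem_smul_pointwise_iff_exists]
  constructor
  · intro h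
    have h1 : E.exp ((a : F) / (m : F)) = 1 := by
      have := congrArg (fun x : Additive ↥(rootsOfUnity m F) => (((Additive.toMul x : ↥(rootsOfUnity m F)) : Fˣ) : F)) h
      simpa [psi, expUnit_val] using this
    refine ⟨⟨(a : F) / (m : F),
      E.mem_ker_iff.mpr ⟨E.div_nat_mem_D ((E.mem_ker_iff.mp a.2).1) m, h1⟩⟩,
      AddSubgroup.mem_top _, ?_⟩
    ext
    push_cast
    exact nsmul_div_nat m _
  · rintro ⟨y, -, rfl⟩
    have hy : ((m • y : ↥E.ker) : F) / (m : F) = (y : F) := by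
      have hm : (m : F) ≠ 0 := Nat.cast_ne_zero.mpr (NeZero.ne m)
      push_cast
      rw [nsmul_eq_mul]
      field_simp
    have h1 : E.exp (((m • y : ↥E.ker) : F) / (m : F)) = 1 := by
      rw [hy]; exact (E.mem_ker_iff.mp y.2).2
    rw [show (0 : Additive ↥(rootsOfUnity m F)) = Additive.ofMul 1 from rfl]
    simp only [psi, AddMonoidHom.coe_mk, ZeroHom.coe_mk]
    exact congrArg Additive.ofMul (by ext; simpa [expUnit_val] using h1)

lemma PEField.psi_surjective (m : ℕ) [NeZero m] (hfull : E.FullKernel) :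
    Function.Surjective (E.psi m) := by
  intro x
  set v : ↥(rootsOfUnity m F) := Additive.toMul x with hv
  have hvpow : ((v : Fˣ) : F) ^ m = 1 := by
    have h := (mem_rootsOfUnity m (v : Fˣ)).mp v.2
    have h2 := congrArg Units.val h
    simpa [Units.val_pow_eq_pow_val] using h2
  obtain ⟨b, hbD, hbexp⟩ := hfull ((v : Fˣ) : F) ⟨m, Nat.pos_of_ne_zero (NeZero.ne m), hvpow⟩
  have haK : (m : ℚ) • b ∈ E.ker := by
    refine E.mem_ker_iff.mpr ⟨E.D.smul_mem _ hbD, ?_⟩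
    have : ((m : ℚ) • b) = m • b := by
      rw [Rat.smul_def, nsmul_eq_mul]; push_cast; ring
    rw [this, E.exp_nsmul m hbD, hbexp, hvpow]
  refine ⟨⟨(m : ℚ) • b, haK⟩, ?_⟩
  have hdiv : (((⟨(m : ℚ) • b, haK⟩ : ↥E.ker) : F)) / (m : F) = b := by
    have hm : (m : F) ≠ 0 := Nat.cast_ne_zero.mpr (NeZero.ne m)
    simp only [Rat.smul_def]
    push_cast
    field_simp
  exact (E.psi_apply_eq_iff m _ ((v : Fˣ)) v.2).mpr (by rw [hdiv, hbexp])

lemma PEField.card_rootsOfUnity_additive (m : ℕ) [NeZero m]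
    {ζ : F} (hζ : IsPrimitiveRoot ζ m) :
    Nat.card (Additive ↥(rootsOfUnity m F)) = m := by
  rw [Nat.card_congr (Additive.toMul (α := ↥(rootsOfUnity m F)))]
  exact hζ.card_rootsOfUnity

end Statement3Aux

/-- a partial E-field whose field contains primitive m-th roots of unity
for all m ≥ 1 has full kernel iff `ker(F)/m·ker(F)` is cyclic of order `m` for all
`m ≥ 1`. -/
theorem fullKernel_iff_kernel_quotients_cyclic
    {F : Type*} [Field F] [CharZero F] (E : PEField F)
    (hroots : ∀ m : ℕ, 0 < m → ∃ ζ : F, IsPrimitiveRoot ζ m) :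
    E.FullKernel ↔
      ∀ m : ℕ, 0 < m →
        IsAddCyclic (↥E.ker ⧸ (m • (⊤ : AddSubgroup ↥E.ker))) ∧
        Nat.card (↥E.ker ⧸ (m • (⊤ : AddSubgroup ↥E.ker))) = m := by
  constructor
  · intro hfull m hm
    haveI : NeZero m := ⟨hm.ne'⟩
    obtain ⟨ζ, hζ⟩ := hroots m hm
    have e : (↥E.ker ⧸ (m • (⊤ : AddSubgroup ↥E.ker))) ≃+
        Additive ↥(rootsOfUnity m F) :=
      (QuotientAddGroup.quotientAddEquivOfEq (E.ker_psi m).symm).trans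
        (QuotientAddGroup.quotientKerEquivOfSurjective (E.psi m)
          (E.psi_surjective m hfull))
    haveI : IsAddCyclic (Additive ↥(rootsOfUnity m F)) := inferInstance
    refine ⟨isAddCyclic_of_surjective e.symm e.symm.surjective, ?_⟩
    rw [Nat.card_congr e.toEquiv, PEField.card_rootsOfUnity_additive m hζ]
  · rintro h x ⟨m, hm, hxm⟩
    haveI : NeZero m := ⟨hm.ne'⟩
    obtain ⟨ζ, hζ⟩ := hroots m hm
    obtain ⟨-, hcard⟩ := h m hm
    have hinj : Function.Injective (QuotientAddGroup.kerLift (E.psi m)) :=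
      QuotientAddGroup.kerLift_injective _
    have hcard' : Nat.card (↥E.ker ⧸ (E.psi m).ker) = m := by
      rw [E.ker_psi m]; exact hcard
    have hbij : Function.Bijective (QuotientAddGroup.kerLift (E.psi m)) :=
      (Nat.bijective_iff_injective_and_card _).mpr
        ⟨hinj, by rw [hcard', PEField.card_rootsOfUnity_additive m hζ]⟩
    have hx0 : x ≠ 0 := by
      intro h0
      rw [h0, zero_pow hm.ne'] at hxm
      exact zero_ne_one hxm
    have hu : Units.mk0 x hx0 ∈ rootsOfUnity m F :=
      (mem_rootsOfUnity' m _).mpr (by simpa using hxm)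
    obtain ⟨q, hq⟩ := hbij.2
      (Additive.ofMul (⟨Units.mk0 x hx0, hu⟩ : rootsOfUnity m F))
    obtain ⟨a, rfl⟩ := QuotientAddGroup.mk_surjective q
    rw [QuotientAddGroup.kerLift_mk] at hq
    rw [E.psi_apply_eq_iff m a _ hu] at hq
    exact ⟨(a : F) / (m : F), E.div_nat_mem_D ((E.mem_ker_iff.mp a.2).1) m,
      by simpa using hq⟩

end Paper
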